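/- arXiv:1405.6356 — 3 statements merged into one kernel-verified Lean document; each statement's English description precedes it below -/
import Mathlib

section
/- Let G = ⊕_ω Z/2Z with a group topology, and suppose that for every function f : ω → ω the set U_f = {x ≠ 0 : max supp(x) > f(min supp(x))} ∪ {0} contains an open neighborhood of 0. Let f : ω → ω be increasing, define g(n) = f(2^{n+1}), and let V be a neighborhood of 0 with V + V ⊆ U_g. Then the increasing enumeration (m_0, m_1, …) of the set {max supp(x) : x ∈ V, x ≠ 0} satisfies m_i > f(i) for all i ∈ ω. -/
noncomputable def mins (x : ℕ →₀ ZMod 2) : ℕ := sInf {n | x n ≠ 0}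
noncomputable def maxs (x : ℕ →₀ ZMod 2) : ℕ := sSup {n | x n ≠ 0}

/-- For f : ℕ → ℕ, the set U_f = {x ≠ 0 : max supp x > f (min supp x)} ∪ {0}. -/
def Uf (f : ℕ → ℕ) : Set (ℕ →₀ ZMod 2) := {x | x = 0 ∨ f (mins x) < maxs x}

lemma supp_bdd (x : ℕ →₀ ZMod 2) : BddAbove {n | x n ≠ 0} := by
  have : {n | x n ≠ 0} = ↑x.support := by ext n; simp [Finsupp.mem_support_iff]
  rw [this]; exact x.support.finite_toSet.bddAbove

lemma supp_ne (x : ℕ →₀ ZMod 2) (hx : x ≠ 0) : {n | x n ≠ 0}.Nonempty := by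
  rcases Finsupp.ne_iff.1 hx with ⟨n, hn⟩
  exact ⟨n, by simpa using hn⟩

lemma maxs_apply (x : ℕ →₀ ZMod 2) (hx : x ≠ 0) : x (maxs x) ≠ 0 :=
  Nat.sSup_mem (supp_ne x hx) (supp_bdd x)

lemma le_maxs (x : ℕ →₀ ZMod 2) {n : ℕ} (hn : x n ≠ 0) : n ≤ maxs x :=
  le_csSup (supp_bdd x) hn

lemma mins_apply (x : ℕ →₀ ZMod 2) (hx : x ≠ 0) : x (mins x) ≠ 0 :=
  Nat.sInf_mem (supp_ne x hx)

/-- Lemma 1. -/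
theorem stmt1 [TopologicalSpace (ℕ →₀ ZMod 2)] [IsTopologicalAddGroup (ℕ →₀ ZMod 2)]
    (hU : ∀ f : ℕ → ℕ, ∃ W : Set (ℕ →₀ ZMod 2), IsOpen W ∧ 0 ∈ W ∧ W ⊆ Uf f)
    (f : ℕ → ℕ) (hf : Monotone f)
    (V : Set (ℕ →₀ ZMod 2)) (hV : V ∈ nhds 0)
    (hVV : ∀ x ∈ V, ∀ y ∈ V, x + y ∈ Uf (fun n => f (2 ^ (n + 1))))
    (e : ℕ → ℕ) (he : StrictMono e) (hrange : Set.range e = maxs '' (V \ {0})) :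
    ∀ i, f i < e i := by
  intro i
  by_contra hcon
  push_neg at hcon
  have h0V : (0 : ℕ →₀ ZMod 2) ∈ V := mem_of_mem_nhds hV
  have hx : ∀ j : ℕ, ∃ y, (y ∈ V ∧ y ≠ 0) ∧ maxs y = e j := by
    intro j
    have h : e j ∈ maxs '' (V \ {0}) := hrange ▸ Set.mem_range_self j
    rcases h with ⟨y, hy, hy2⟩
    exact ⟨y, ⟨hy.1, hy.2⟩, hy2⟩
  choose x hxV hxmax using hx
  -- every element of V is in Uf g
  have hUg : ∀ y ∈ V, y ≠ 0 → f (2 ^ (mins y + 1)) < maxs y := by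
    intro y hy hy0
    have := hVV y hy 0 h0V
    rw [add_zero] at this
    rcases this with h | h
    · exact absurd h hy0
    · exact h
  rcases Nat.eq_zero_or_pos i with hi0 | hipos
  · -- case i = 0
    subst hi0
    have h1 := hUg (x 0) (hxV 0).1 (hxV 0).2
    rw [hxmax 0] at h1
    have h2 : f 0 ≤ f (2 ^ (mins (x 0) + 1)) := hf (Nat.zero_le _)
    omega
  · set K := Nat.log 2 i with hK
    have key : ∀ j k : ℕ, j < k → k ≤ i → (∀ t : Fin K, x j t.val = x k t.val) → False := by
      intro j k hjk hki hagree
      set z := x j + x k with hz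
      have hjmax := hxmax j
      have hkmax := hxmax k
      have h1 : x j (e k) = 0 := by
        by_contra h
        have := le_maxs _ h
        rw [hjmax] at this
        exact absurd this (not_le.2 (he hjk))
      have h2 : x k (e k) ≠ 0 := by
        have := maxs_apply (x k) (hxV k).2
        rwa [hkmax] at this
      have hzk : z (e k) ≠ 0 := by
        rw [hz, Finsupp.add_apply, h1, zero_add]; exact h2
      have hz0 : z ≠ 0 := by
        intro h; rw [h] at hzk; exact hzk rfl
      have hmaxle : maxs z ≤ e k := by
        apply csSup_le (supp_ne z hz0)
        intro n hn
        simp only [Set.mem_setOf_eq, hz, Finsupp.add_apply] at hn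
        by_cases hj : x j n = 0
        · have hk' : x k n ≠ 0 := by
            intro h; rw [hj, h, add_zero] at hn; exact hn rfl
          exact le_maxs _ hk' |>.trans (le_of_eq hkmax)
        · calc n ≤ maxs (x j) := le_maxs _ hj
            _ = e j := hjmax
            _ ≤ e k := le_of_lt (he hjk)
      have hzU := hVV (x j) (hxV j).1 (x k) (hxV k).1
      rcases hzU with h | h
      · exact hz0 h
      · -- h : f (2 ^ (mins z + 1)) < maxs z
        have hchain : f (2 ^ (mins z + 1)) < f i := by
          calc f (2 ^ (mins z + 1)) < maxs z := h
            _ ≤ e k := hmaxle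
            _ ≤ e i := he.monotone hki
            _ ≤ f i := hcon
        have hlt : 2 ^ (mins z + 1) < i := by
          by_contra hle
          push_neg at hle
          exact absurd (hf hle) (not_le.2 hchain)
        have hlt2 : i < 2 ^ (K + 1) := Nat.lt_pow_succ_log_self (by norm_num) i
        have hminK : mins z < K := by
          have : 2 ^ (mins z + 1) < 2 ^ (K + 1) := lt_trans hlt hlt2
          have := (Nat.pow_lt_pow_iff_right (by norm_num : 1 < 2)).1 this
          omega
        have hzm : z (mins z) ≠ 0 := mins_apply z hz0
        have haa : ∀ a : ZMod 2, a + a = 0 := by decide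
        apply hzm
        rw [hz, Finsupp.add_apply, hagree ⟨mins z, hminK⟩, haa]
    -- pigeonhole
    have hcard : (Finset.univ : Finset (Fin K → ZMod 2)).card < (Finset.range (i + 1)).card := by
      rw [Finset.card_range, Finset.card_univ, Fintype.card_fun]
      simp only [Fintype.card_fin, ZMod.card]
      have h2 : 2 ^ K ≤ i := Nat.pow_log_le_self 2 (by omega)
      omega
    obtain ⟨j, hj, k, hk, hjk, heq⟩ :=
      Finset.exists_ne_map_eq_of_card_lt_of_maps_to hcard
        (fun a _ => Finset.mem_univ (fun t : Fin K => x a t.val))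
    have hj' : j ≤ i := by have := Finset.mem_range.1 hj; omega
    have hk' : k ≤ i := by have := Finset.mem_range.1 hk; omega
    rcases hjk.lt_or_gt with hlt | hlt
    · exact key j k hlt hk' (fun t => congrFun heq t)
    · exact key k j hlt hj' (fun t => (congrFun heq t).symm)
end

section
/- Let G be a countable vector space over the field Z/2Z, and let G = G_0 ⊇ G_1 ⊇ G_2 ⊇ … be a decreasing chain of subspaces with ⋂_{i∈ω} G_i = {0}. Then there exists a basis E = {e_n : n ∈ ω} of G such that for every i ∈ ω there is a subset J_i ⊆ ω with G_i = span{e_n : n ∈ J_i}. -/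
/-- a countable ℤ/2ℤ-vector space with a decreasing chain of subspaces
with trivial intersection has a basis adapted to the chain. -/
theorem stmt2 (G : Type) [AddCommGroup G] [Module (ZMod 2) G] [Countable G]
    (Gs : ℕ → Submodule (ZMod 2) G) (h0 : Gs 0 = ⊤) (hdec : Antitone Gs)
    (hint : ⨅ i, Gs i = ⊥) :
    ∃ (ι : Type) (_ : Countable ι) (b : Module.Basis ι (ZMod 2) G),
      ∀ i, ∃ J : Set ι, Gs i = Submodule.span (ZMod 2) (⇑b '' J) := by
  classical
  have htwo : ∀ c : ZMod 2, c = 0 ∨ c = 1 := by decide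
  haveI : Fact (Nat.Prime 2) := ⟨Nat.prime_two⟩
  set R := ZMod 2 with hR
  -- every nonzero element escapes the chain
  have hne : ∀ x : G, x ≠ 0 → ∃ i, x ∉ Gs i := by
    intro x hx
    by_contra h
    push_neg at h
    have : x ∈ ⨅ i, Gs i := Submodule.mem_iInf Gs |>.mpr h
    rw [hint, Submodule.mem_bot] at this
    exact hx this
  -- depth function
  set N : G → ℕ := fun x => sInf {i | x ∉ Gs i} with hNdef
  have hmem : ∀ x : G, x ≠ 0 → ∀ i, (x ∈ Gs i ↔ i < N x) := by
    intro x hx i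
    have hns : {i | x ∉ Gs i}.Nonempty := hne x hx
    constructor
    · intro hxi
      by_contra h
      push_neg at h
      exact (Nat.sInf_mem hns) (hdec h hxi)
    · intro h
      by_contra hxi
      exact absurd (Nat.sInf_le hxi) (not_le.mpr h)
  -- the adaptedness predicate
  set P : Set G → Prop := fun B => B.Finite ∧ LinearIndependent R ((↑) : B → G) ∧
      ∀ i, Submodule.span R B ⊓ Gs i = Submodule.span R (B ∩ (Gs i : Set G)) with hPdef
  have hPempty : P ∅ := by
    refine ⟨Set.finite_empty, linearIndependent_empty R G, fun i => ?_⟩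
    simp
  -- the extension step
  have hext : ∀ B : Set G, P B → ∀ g : G, ∃ B' : Set G, B ⊆ B' ∧ P B' ∧
      g ∈ Submodule.span R B' := by
    rintro B ⟨hBfin, hBind, hBad⟩ g
    by_cases hg : g ∈ Submodule.span R B
    · exact ⟨B, le_refl _, ⟨hBfin, hBind, hBad⟩, hg⟩
    -- the span of B is finite
    haveI := Module.Finite.span_of_finite R hBfin
    haveI : Finite (Submodule.span R B) := Module.finite_of_finite R
    have hsfin : (Submodule.span R B : Set G).Finite := Set.toFinite _
    -- pick a representative of the coset g + span B of maximal depth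
    obtain ⟨b0, hb0mem, hb0max⟩ := Set.Finite.exists_maximalFor (fun b => N (g + b))
      (Submodule.span R B : Set G) hsfin ⟨0, Submodule.zero_mem _⟩
    have hle : ∀ b ∈ Submodule.span R B, N (g + b) ≤ N (g + b0) := by
      intro b hb
      by_contra h
      push_neg at h
      exact absurd (hb0max hb h.le) (not_le.mpr h)
    set g' : G := g + b0 with hg'def
    have hg'notin : g' ∉ Submodule.span R B := by
      intro h
      exact hg (by simpa [hg'def] using Submodule.sub_mem _ h hb0mem)
    have hg'ne : g' ≠ 0 := fun h => hg'notin (h ▸ Submodule.zero_mem _)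
    have hcoset : ∀ c ∈ Submodule.span R B, g + c ≠ 0 := by
      intro c hc h
      apply hg
      have : g = -c := by linear_combination (norm := abel) h
      rw [this]; exact Submodule.neg_mem _ hc
    refine ⟨insert g' B, Set.subset_insert _ _, ⟨hBfin.insert _, LinearIndepOn.insert (v := id) hBind (by simpa using hg'notin), ?_⟩, ?_⟩
    · intro i
      apply le_antisymm
      · rintro x hx
        rw [Submodule.mem_inf] at hx
        obtain ⟨hx1, hx2⟩ := hx
        rw [Submodule.mem_span_insert] at hx1
        obtain ⟨a, z, hz, rfl⟩ := hx1
        rcases htwo a with rfl | rfl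
        · rw [zero_smul, zero_add] at hx2 ⊢
          have : z ∈ Submodule.span R B ⊓ Gs i := Submodule.mem_inf.mpr ⟨hz, hx2⟩
          rw [hBad i] at this
          exact Submodule.span_mono (Set.inter_subset_inter_left _ (Set.subset_insert _ _)) this
        · rw [one_smul] at hx2 ⊢
          by_cases hi : g' ∈ Gs i
          · have hz2 : z ∈ Gs i := by
              have := Submodule.sub_mem _ hx2 hi
              simpa using this
            have hzsp : z ∈ Submodule.span R (B ∩ (Gs i : Set G)) := by
              rw [← hBad i]; exact Submodule.mem_inf.mpr ⟨hz, hz2⟩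
            refine Submodule.add_mem _ (Submodule.subset_span ⟨Set.mem_insert _ _, hi⟩) ?_
            exact Submodule.span_mono (Set.inter_subset_inter_left _ (Set.subset_insert _ _)) hzsp
          · exfalso
            have hc : b0 + z ∈ Submodule.span R B := Submodule.add_mem _ hb0mem hz
            have hxne : g + (b0 + z) ≠ 0 := hcoset _ hc
            have hxeq : g' + z = g + (b0 + z) := by rw [hg'def]; abel
            have hiN : i < N (g + (b0 + z)) := by
              rw [← hmem _ hxne i, ← hxeq]; exact hx2
            have h1 : N (g + (b0 + z)) ≤ N g' := hle _ hc
            have h2 : N g' ≤ i := by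
              by_contra h
              push_neg at h
              exact hi ((hmem g' hg'ne i).mpr h)
            omega
      · refine le_inf (Submodule.span_mono Set.inter_subset_left) ?_
        rw [Submodule.span_le]
        exact Set.inter_subset_right
    · have : g = g' - b0 := by simp [hg'def]
      rw [this]
      exact Submodule.sub_mem _ (Submodule.subset_span (Set.mem_insert _ _))
        (Submodule.span_mono (Set.subset_insert _ _) hb0mem)
  -- enumerate G
  haveI : Nonempty G := ⟨0⟩
  obtain ⟨f, hf⟩ := exists_surjective_nat G
  -- build the chain of finite adapted sets
  choose step hstepsub hstepP hstepg using hext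
  let F' : ℕ → {B : Set G // P B} := fun n =>
    Nat.rec ⟨∅, hPempty⟩ (fun n p => ⟨step p.1 p.2 (f n), hstepP p.1 p.2 (f n)⟩) n
  set F : ℕ → Set G := fun n => (F' n).1 with hFdef
  have hFP : ∀ n, P (F n) := fun n => (F' n).2
  have hFsub : ∀ n, F n ⊆ F (n + 1) := fun n => hstepsub _ _ _
  have hFspan : ∀ n, f n ∈ Submodule.span R (F (n + 1)) := fun n => hstepg _ _ _
  have hmono : Monotone F := monotone_nat_of_le_succ hFsub
  set E : Set G := ⋃ n, F n with hEdef
  have hEind : LinearIndependent R ((↑) : E → G) :=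
    linearIndepOn_iUnion_of_directed (R := R) (v := (id : G → G)) hmono.directed_le (fun n => by exact (hFP n).2.1)
  have hEspan : ⊤ ≤ Submodule.span R E := by
    intro x _
    obtain ⟨n, rfl⟩ := hf x
    exact Submodule.span_mono (Set.subset_iUnion F (n + 1)) (hFspan n)
  let b : Module.Basis E R G := Module.Basis.mk hEind (by rwa [Subtype.range_coe])
  refine ⟨E, inferInstance, b, fun i => ?_⟩
  refine ⟨{x : E | (x : G) ∈ Gs i}, ?_⟩
  have himg : ⇑b '' {x : E | (x : G) ∈ Gs i} = E ∩ (Gs i : Set G) := by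
    ext y
    simp only [Module.Basis.coe_mk, b, Set.mem_image, Set.mem_setOf_eq, Set.mem_inter_iff]
    constructor
    · rintro ⟨⟨z, hz⟩, hz2, rfl⟩
      exact ⟨hz, hz2⟩
    · rintro ⟨hy, hy2⟩
      exact ⟨⟨y, hy⟩, hy2, rfl⟩
  rw [himg]
  apply le_antisymm
  · intro x hx
    have hxE : x ∈ Submodule.span R E := hEspan Submodule.mem_top
    have hx2 : x ∈ ⨆ n, Submodule.span R (F n) := by
      rwa [← Submodule.span_iUnion]
    have hdir : Directed (· ≤ ·) (fun n => Submodule.span R (F n)) :=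
      (Monotone.directed_le fun m n h => Submodule.span_mono (hmono h))
    obtain ⟨n, hn⟩ := (Submodule.mem_iSup_of_directed _ hdir).mp hx2
    have : x ∈ Submodule.span R (F n ∩ (Gs i : Set G)) := by
      rw [← (hFP n).2.2 i]
      exact Submodule.mem_inf.mpr ⟨hn, hx⟩
    exact Submodule.span_mono
      (Set.inter_subset_inter_left _ (Set.subset_iUnion F n)) this
  · rw [Submodule.span_le]
    exact Set.inter_subset_right
end

section
/- Let G be a countable nondiscrete Boolean topological group containing a decreasing family of open subgroups G_i, i ∈ ω, with ⋂_i G_i = {0}. Then there exists a continuous group isomorphism φ : G → ⊕_ω Z/2Z, where ⊕_ω Z/2Z carries the topology inherited from the product topology on ∏_ω Z/2Z. -/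
/-- The product topology on ⊕_ω ℤ/2ℤ, inherited from ∏_ω ℤ/2ℤ with ℤ/2ℤ discrete. -/
def prodTop : TopologicalSpace (ℕ →₀ ZMod 2) :=
  TopologicalSpace.induced (fun x => (x : ℕ → ZMod 2))
    (@Pi.topologicalSpace ℕ (fun _ => ZMod 2) (fun _ => ⊥))

open Submodule Set Classical

section Aux

variable {V : Type} [AddCommGroup V] [Module (ZMod 2) V]

/-- depth of v: first i with v ∉ S i -/
noncomputable def dpth (S : ℕ → Submodule (ZMod 2) V) (v : V) : ℕ :=
  if h : ∃ i, v ∉ S i then Nat.find h else 0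

variable {S : ℕ → Submodule (ZMod 2) V}

lemma dpth_spec (hdec : Antitone S) (hint : ⨅ i, S i = ⊥) {v : V} (hv : v ≠ 0) (i : ℕ) :
    v ∈ S i ↔ i < dpth S v := by
  have hex : ∃ i, v ∉ S i := by
    by_contra h
    push_neg at h
    have : v ∈ (⊥ : Submodule (ZMod 2) V) := hint ▸ (Submodule.mem_iInf S).2 h
    exact hv (by simpa using this)
  rw [dpth, dif_pos hex, Nat.lt_find_iff]
  constructor
  · intro hm m hmi
    simpa using hdec hmi hm
  · intro h
    simpa using h i le_rfl

/-- the coset v + span T -/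
def cst (T : Set V) (v : V) : Set V := (v + ·) '' ((span (ZMod 2) T : Submodule (ZMod 2) V) : Set V)

lemma cst_finite {T : Set V} (hT : T.Finite) (v : V) : (cst T v).Finite := by
  have hfg : (span (ZMod 2) T).FG := Submodule.fg_span hT
  have : Module.Finite (ZMod 2) (span (ZMod 2) T) := Module.Finite.iff_fg.mpr hfg
  have : Finite (span (ZMod 2) T) := Module.finite_of_finite (ZMod 2)
  exact ((span (ZMod 2) T : Set V).toFinite).image _

lemma exists_max_cst {T : Set V} (hT : T.Finite) (v : V) :
    ∃ w ∈ cst T v, ∀ u ∈ cst T v, dpth S u ≤ dpth S w :=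
  Set.exists_max_image (cst T v) (dpth S) (cst_finite hT v)
    ⟨v, 0, Submodule.zero_mem _, add_zero v⟩

end Aux

section Aux2

variable {V : Type} [AddCommGroup V] [Module (ZMod 2) V]

/-- pick an element of the coset `v + span T` of maximal depth -/
noncomputable def nxt (S : ℕ → Submodule (ZMod 2) V) (T : Set V) (v : V) : V :=
  if h : ∃ w ∈ cst T v, ∀ u ∈ cst T v, dpth S u ≤ dpth S w then h.choose else v

noncomputable def picks (S : ℕ → Submodule (ZMod 2) V) (f : ℕ → V) : ℕ → Set V
  | 0 => ∅
  | n + 1 =>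
      if f n ∈ span (ZMod 2) (picks S f n) then picks S f n
      else insert (nxt S (picks S f n) (f n)) (picks S f n)

variable {S : ℕ → Submodule (ZMod 2) V}

lemma step_lemma (hdec : Antitone S) (hint : ⨅ i, S i = ⊥) {T : Set V} (hT : T.Finite)
    (had : ∀ i, span (ZMod 2) (T ∩ (S i : Set V)) = span (ZMod 2) T ⊓ S i)
    {v : V} (hv : v ∉ span (ZMod 2) T) :
    nxt S T v ∉ span (ZMod 2) T ∧ v ∈ span (ZMod 2) (insert (nxt S T v) T) ∧
      ∀ i, span (ZMod 2) (insert (nxt S T v) T ∩ (S i : Set V)) =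
        span (ZMod 2) (insert (nxt S T v) T) ⊓ S i := by
  have hex := exists_max_cst (S := S) hT v
  set w := nxt S T v with hw
  have hws : w ∈ cst T v ∧ ∀ u ∈ cst T v, dpth S u ≤ dpth S w := by
    rw [hw, nxt, dif_pos hex]
    exact ⟨hex.choose_spec.1, hex.choose_spec.2⟩
  obtain ⟨⟨t, ht, hwt⟩, hmax⟩ := hws
  -- w = v + t, t ∈ span T
  have two : ∀ x : V, x + x = 0 := fun x => by
    calc x + x = (1 : ZMod 2) • x + (1 : ZMod 2) • x := by rw [one_smul]
      _ = ((1 : ZMod 2) + 1) • x := (add_smul 1 1 x).symm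
      _ = (0 : ZMod 2) • x := by rw [show ((1 : ZMod 2) + 1) = 0 by decide]
      _ = 0 := zero_smul _ x
  have hvw : v = w + t := by
    rw [← hwt, add_assoc, two t, add_zero]
  have hwspan : w ∉ span (ZMod 2) T := fun hws => hv (hvw ▸ add_mem hws ht)
  have hw0 : w ≠ 0 := fun h => hwspan (h ▸ Submodule.zero_mem _)
  refine ⟨hwspan, ?_, ?_⟩
  · rw [hvw]
    exact add_mem (subset_span (mem_insert _ _))
      (span_mono (subset_insert _ _) ht)
  intro i
  apply le_antisymm
  · apply span_le.mpr
    rintro x ⟨hx1, hx2⟩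
    exact ⟨subset_span hx1, hx2⟩
  rintro x ⟨hx1, hx2⟩
  obtain ⟨a, z, hz, rfl⟩ := Submodule.mem_span_insert.mp hx1
  have ha : a = 0 ∨ a = 1 := by
    fin_cases a
    · left; rfl
    · right; rfl
  rcases ha with rfl | rfl
  · rw [zero_smul, zero_add] at hx2 ⊢
    have : z ∈ span (ZMod 2) (T ∩ (S i : Set V)) := (had i).symm ▸ Submodule.mem_inf.mpr ⟨hz, hx2⟩
    exact span_mono (Set.inter_subset_inter_left _ (subset_insert _ _)) this
  · rw [one_smul] at hx2 ⊢
    have hx0 : w + z ≠ 0 := by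
      intro h0
      apply hwspan
      have hwz : w = z := by rw [← add_zero w, ← two z, ← add_assoc, h0, zero_add]
      exact hwz ▸ hz
    have hxc : w + z ∈ cst T v := ⟨t + z, add_mem ht hz, by
      show v + (t + z) = w + z
      rw [hvw, add_assoc, ← add_assoc t t z, two t, zero_add]⟩
    have hdx : dpth S (w + z) ≤ dpth S w := hmax _ hxc
    have hiw : i < dpth S w := lt_of_lt_of_le ((dpth_spec hdec hint hx0 i).mp hx2) hdx
    have hwSi : w ∈ S i := (dpth_spec hdec hint hw0 i).mpr hiw
    have hzSi : z ∈ S i := by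
      have := Submodule.sub_mem (S i) hx2 hwSi
      simpa using this
    have hzsp : z ∈ span (ZMod 2) (T ∩ (S i : Set V)) :=
      (had i).symm ▸ Submodule.mem_inf.mpr ⟨hz, hzSi⟩
    exact add_mem (subset_span ⟨mem_insert _ _, hwSi⟩)
      (span_mono (Set.inter_subset_inter_left _ (subset_insert _ _)) hzsp)

end Aux2

section Aux3

variable {V : Type} [AddCommGroup V] [Module (ZMod 2) V] {S : ℕ → Submodule (ZMod 2) V}

lemma picks_subset_succ (f : ℕ → V) (n : ℕ) : picks S f n ⊆ picks S f (n + 1) := by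
  show picks S f n ⊆ (if _ then _ else _)
  split
  · exact subset_rfl
  · exact Set.subset_insert _ _

lemma picks_mono (f : ℕ → V) : Monotone (picks S f) :=
  monotone_nat_of_le_succ (picks_subset_succ f)

lemma picks_inv (hdec : Antitone S) (hint : ⨅ i, S i = ⊥) (f : ℕ → V) (n : ℕ) :
    (picks S f n).Finite ∧ LinearIndependent (ZMod 2) ((↑) : picks S f n → V) ∧
      ∀ i, span (ZMod 2) (picks S f n ∩ (S i : Set V)) = span (ZMod 2) (picks S f n) ⊓ S i := by
  induction n with
  | zero =>
      refine ⟨Set.finite_empty, linearIndependent_empty _ _, fun i => ?_⟩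
      simp only [picks, Set.empty_inter, span_empty, bot_inf_eq]
  | succ n ih =>
      obtain ⟨hfin, hli, had⟩ := ih
      by_cases hns : f n ∈ span (ZMod 2) (picks S f n)
      · have he : picks S f (n + 1) = picks S f n := by
          simp only [picks, if_pos hns]
        rw [he]
        exact ⟨hfin, hli, had⟩
      · obtain ⟨hw1, _, hw3⟩ := step_lemma hdec hint hfin had hns
        have he : picks S f (n + 1) = insert (nxt S (picks S f n) (f n)) (picks S f n) := by
          simp only [picks, if_neg hns]
        rw [he]
        refine ⟨hfin.insert _, ?_, hw3⟩
        exact (linearIndepOn_id_insert (fun hmem => hw1 (subset_span hmem))).mpr ⟨hli, hw1⟩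

lemma picks_span_succ (hdec : Antitone S) (hint : ⨅ i, S i = ⊥) (f : ℕ → V) (n : ℕ) :
    f n ∈ span (ZMod 2) (picks S f (n + 1)) := by
  obtain ⟨hfin, _, had⟩ := picks_inv hdec hint f n
  by_cases hns : f n ∈ span (ZMod 2) (picks S f n)
  · simpa only [picks, if_pos hns] using hns
  · simp only [picks, if_neg hns]
    exact (step_lemma hdec hint hfin had hns).2.1

lemma exists_adapted_basis [Countable V] (hdec : Antitone S) (hint : ⨅ i, S i = ⊥) :
    ∃ B : Set V, LinearIndependent (ZMod 2) ((↑) : B → V) ∧ span (ZMod 2) B = ⊤ ∧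
      ∀ i, span (ZMod 2) (B ∩ (S i : Set V)) = S i := by
  have : Nonempty V := ⟨0⟩
  obtain ⟨f, hf⟩ := exists_surjective_nat V
  set B : Set V := ⋃ n, picks S f n with hB
  have hdir : Directed (· ⊆ ·) (picks S f) := (picks_mono f).directed_le
  have hspan : ∀ x : V, ∃ n, x ∈ span (ZMod 2) (picks S f n) := by
    intro x
    obtain ⟨n, rfl⟩ := hf x
    exact ⟨n + 1, picks_span_succ hdec hint f n⟩
  refine ⟨B, ?_, ?_, ?_⟩
  · exact linearIndepOn_iUnion_of_directed (R := ZMod 2) (v := id) hdir fun n => (picks_inv hdec hint f n).2.1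
  · rw [eq_top_iff]
    intro x _
    obtain ⟨n, hn⟩ := hspan x
    exact span_mono (Set.subset_iUnion (picks S f) n) hn
  · intro i
    apply le_antisymm
    · exact span_le.mpr fun x hx => hx.2
    · intro x hx
      obtain ⟨n, hn⟩ := hspan x
      have h2 := (picks_inv hdec hint f n).2.2 i
      have : x ∈ span (ZMod 2) (picks S f n ∩ (S i : Set V)) :=
        h2.symm ▸ Submodule.mem_inf.mpr ⟨hn, hx⟩
      exact span_mono (Set.inter_subset_inter_left _ (Set.subset_iUnion (picks S f) n)) this

end Aux3


/-- Lemma 2. -/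
theorem stmt3 (G : Type) [AddCommGroup G] [TopologicalSpace G] [IsTopologicalAddGroup G]
    [Countable G] (hBool : ∀ x : G, x + x = 0) (hnd : ¬ DiscreteTopology G)
    (Gs : ℕ → AddSubgroup G) (hopen : ∀ i, IsOpen (Gs i : Set G)) (hdec : Antitone Gs)
    (hint : ⨅ i, Gs i = ⊥) :
    ∃ φ : G ≃+ (ℕ →₀ ZMod 2), @Continuous G (ℕ →₀ ZMod 2) _ prodTop φ := by
  classical
  letI M : Module (ZMod 2) G := AddCommGroup.zmodModule (n := 2) (fun x => by
    rw [two_nsmul]; exact hBool x)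
  set S : ℕ → Submodule (ZMod 2) G := fun i => AddSubgroup.toZModSubmodule 2 (Gs i) with hS
  have hSdec : Antitone S := fun i j hij => by
    intro x hx
    exact (AddSubgroup.mem_toZModSubmodule 2).mpr (hdec hij ((AddSubgroup.mem_toZModSubmodule 2).mp hx))
  have hSint : ⨅ i, S i = ⊥ := by
    apply le_antisymm _ bot_le
    intro x hx
    have hx' : x ∈ ⨅ i, Gs i := AddSubgroup.mem_iInf.mpr fun i =>
      (AddSubgroup.mem_toZModSubmodule 2).mp ((Submodule.mem_iInf S).mp hx i)
    rw [hint] at hx'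
    simpa using hx'
  have hInf : Infinite G := by
    by_contra hfin
    rw [not_infinite_iff_finite] at hfin
    apply hnd
    have h0 : ({0} : Set G) = ⋂ i, (Gs i : Set G) := by
      ext x
      simp only [Set.mem_singleton_iff, Set.mem_iInter, SetLike.mem_coe]
      constructor
      · rintro rfl i; exact (Gs i).zero_mem
      · intro h
        have hx' : x ∈ ⨅ i, Gs i := AddSubgroup.mem_iInf.mpr h
        rw [hint] at hx'
        simpa using hx'
    have hopen0 : IsOpen ({0} : Set G) := by
      rw [h0, ← Set.sInter_range]
      exact Set.Finite.isOpen_sInter (Set.toFinite _) (by rintro t ⟨i, rfl⟩; exact hopen i)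
    exact discreteTopology_of_isOpen_singleton_zero hopen0
  obtain ⟨B, hBli, hBspan, hBad⟩ := exists_adapted_basis (S := S) hSdec hSint
  let b : Module.Basis B (ZMod 2) G := Module.Basis.mk hBli (by rw [Subtype.range_coe]; exact hBspan.ge)
  have hBinf : Infinite B := by
    rw [Set.infinite_coe_iff]
    intro hBfin
    have hmf : Module.Finite (ZMod 2) G := Module.finite_def.mpr (hBspan ▸ Submodule.fg_span hBfin)
    have : Finite G := Module.finite_of_finite (ZMod 2)
    exact not_finite G
  obtain ⟨d⟩ := nonempty_denumerable ↥B
  let e : ↥B ≃ ℕ := @Denumerable.eqv _ d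
  let φL : G ≃ₗ[ZMod 2] (ℕ →₀ ZMod 2) := b.repr.trans (Finsupp.domLCongr e)
  refine ⟨φL.toAddEquiv, ?_⟩
  -- kernels of coordinate functionals are open
  have hker : ∀ c : B,
      IsOpen ((LinearMap.ker ((Finsupp.lapply c).comp (b.repr : G →ₗ[ZMod 2] (B →₀ ZMod 2)))) : Set G) := by
    intro c
    have hc0 : (c : G) ≠ 0 := hBli.ne_zero c
    apply Submodule.isOpen_mono (U := S (dpth S (c : G)))
    · rw [← hBad (dpth S (c : G))]
      apply Submodule.span_le.mpr
      rintro x ⟨hxB, hxS⟩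
      have hxc : x ≠ (c : G) := by
        rintro rfl
        exact absurd ((dpth_spec hSdec hSint hc0 _).mp hxS) (lt_irrefl _)
      have hxB' : (⟨x, hxB⟩ : B) ≠ c := fun h => hxc (congrArg Subtype.val h)
      have hbx : b ⟨x, hxB⟩ = x := Module.Basis.mk_apply hBli _ ⟨x, hxB⟩
      have hrep : b.repr x = Finsupp.single (⟨x, hxB⟩ : B) 1 := by
        have h2 := b.repr_self (⟨x, hxB⟩ : B)
        rw [hbx] at h2
        exact h2
      show x ∈ LinearMap.ker _
      simp only [LinearMap.mem_ker, LinearMap.comp_apply, Finsupp.lapply_apply,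
        LinearEquiv.coe_coe, hrep]
      exact Finsupp.single_eq_of_ne hxB'.symm
    · exact hopen _
  letI tZ : TopologicalSpace (ZMod 2) := ⊥
  have hcont : ∀ c : B, Continuous (fun x : G => b.repr x c) := by
    intro c
    have hk := hker c
    rw [continuous_def]
    intro s _
    apply isOpen_iff_forall_mem_open.mpr
    intro x hx
    refine ⟨(x + ·) '' ((LinearMap.ker ((Finsupp.lapply c).comp
        (b.repr : G →ₗ[ZMod 2] (B →₀ ZMod 2)))) : Set G), ?_, ?_,
      ⟨0, Submodule.zero_mem _, add_zero x⟩⟩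
    · rintro y ⟨k, hk', rfl⟩
      have hk0 : b.repr k c = 0 := by
        have := LinearMap.mem_ker.mp hk'
        simpa [LinearMap.comp_apply, Finsupp.lapply_apply] using this
      simpa [map_add, Finsupp.add_apply, hk0] using hx
    · exact (Homeomorph.addLeft x).isOpenMap _ hk
  have hc : Continuous (fun x : G => ((φL x : ℕ →₀ ZMod 2) : ℕ → ZMod 2)) := by
    apply continuous_pi
    intro n
    have heq : (fun x : G => ((φL x : ℕ →₀ ZMod 2) : ℕ → ZMod 2) n)
        = fun x : G => b.repr x (e.symm n) := by
      funext x
      simp [φL, Finsupp.domLCongr_apply, Finsupp.equivMapDomain_apply]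
    rw [heq]
    exact hcont _
  rw [show prodTop = TopologicalSpace.induced (fun x : ℕ →₀ ZMod 2 => (x : ℕ → ZMod 2))
    (@Pi.topologicalSpace ℕ (fun _ => ZMod 2) (fun _ => ⊥)) from rfl]
  exact continuous_induced_rng.mpr hc
end
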